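/- Let G be a connected graph on n vertices with average degree d, and fix k ≥ 2. Then π(G,k) ≥ (1/k!)·⌊d/(4(k−1))⌋^{k−1}, where π(G,k) is the number of unordered k-tuples (n₁ ≥ n₂ ≥ ⋯ ≥ n_k ≥ 1) with Σ n_i = n for which there exists a partition V(G) = V₁ ⊔ ⋯ ⊔ V_k with |V_i| = n_i and each G[V_i] connected. -/

import Mathlib

/-- The set of unordered `k`-tuples (encoded as weakly decreasing tuples) of positive
integers realizable as the part sizes of a partition of `V(G)` into `k` parts, each
inducing a connected subgraph. -/
def kVertexTuples {V : Type*} (G : SimpleGraph V) (k : ℕ) : Set (Fin k → ℕ) :=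
  {a | (∀ i, 1 ≤ a i) ∧ (∀ i j : Fin k, i ≤ j → a j ≤ a i) ∧
    ∃ Pa : Fin k → Set V, (⋃ i, Pa i) = Set.univ ∧
      (Pairwise fun i j => Disjoint (Pa i) (Pa j)) ∧
      ∀ i, (G.induce (Pa i)).Connected ∧ (Pa i).ncard = a i}

/-- `piG G k`: the number of unordered `k`-tuples realizable by connected vertex
partitions. -/
noncomputable def piG {V : Type*} (G : SimpleGraph V) (k : ℕ) : ℕ :=
  (kVertexTuples G k).ncard

set_option linter.unusedSectionVars false
set_option maxHeartbeats 1000000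

namespace PiGeAux

section A
variable {V : Type*}


variable {V : Type*}

/-- The set of vertices whose forward orbit under `f` hits `x`. -/
def Sub (f : V → V) (x : V) : Set V := {v | ∃ n, f^[n] v = x}

lemma mem_Sub_self (f : V → V) (x : V) : x ∈ Sub f x := ⟨0, rfl⟩

lemma Sub_trans {f : V → V} {v x y : V} (h1 : v ∈ Sub f x) (h2 : x ∈ Sub f y) :
    v ∈ Sub f y := by
  obtain ⟨n, hn⟩ := h1
  obtain ⟨m, hm⟩ := h2
  exact ⟨m + n, by rw [Function.iterate_add_apply, hn, hm]⟩

lemma Sub_root {f : V → V} {r : V} (hreach : ∀ v, ∃ N, f^[N] v = r) :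
    Sub f r = Set.univ :=
  Set.eq_univ_of_forall fun v => hreach v

lemma Sub_antisymm {f : V → V} {r x y : V} (hr : f r = r)
    (hreach : ∀ v, ∃ N, f^[N] v = r) (hxy : x ∈ Sub f y) (hyx : y ∈ Sub f x) :
    x = y := by
  obtain ⟨m, hm⟩ := hxy
  obtain ⟨n, hn⟩ := hyx
  rcases Nat.eq_zero_or_pos (n + m) with h0 | hpos
  · have hm0 : m = 0 := by omega
    rw [hm0] at hm
    simpa using hm
  · have hcyc : f^[n + m] x = x := by
      rw [Function.iterate_add_apply, hm, hn]
    have hper : ∀ c, f^[c * (n + m)] x = x := by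
      intro c
      induction c with
      | zero => simp
      | succ c ih =>
        rw [Nat.succ_mul, Function.iterate_add_apply, hcyc, ih]
    obtain ⟨N, hN⟩ := hreach x
    have hxr : x = r := by
      have hbig : N ≤ (N + 1) * (n + m) := by nlinarith
      have h1 : f^[(N + 1) * (n + m)] x = x := hper (N + 1)
      have h2 : f^[(N + 1) * (n + m)] x = f^[(N + 1) * (n + m) - N] (f^[N] x) := by
        rw [← Function.iterate_add_apply]
        congr 1
        omega
      rw [h2, hN, Function.iterate_fixed hr] at h1
      exact h1.symm
    subst hxr
    rw [Function.iterate_fixed hr] at hm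
    exact hm

lemma not_mem_Sub {f : V → V} {r x y : V} (hr : f r = r)
    (hreach : ∀ v, ∃ N, f^[N] v = r) (hxy : x ∈ Sub f y) (hne : x ≠ y) :
    y ∉ Sub f x := fun hyx => hne (Sub_antisymm hr hreach hxy hyx)

lemma part_connected (G : SimpleGraph V) {f : V → V} {r : V} (hr : f r = r)
    (hadj : ∀ v, v ≠ r → G.Adj v (f v)) (x : V) (T : Set V)
    (hxT : x ∉ T) (hT : ∀ v, f v ∈ T → v ∈ T) :
    (G.induce (Sub f x \ T)).Connected := by
  classical
  set D : Set V := Sub f x \ T with hD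
  have hxD : x ∈ D := ⟨mem_Sub_self f x, hxT⟩
  have main : ∀ n (v : V) (hv : v ∈ D), f^[n] v = x → (∀ i, i < n → f^[i] v ≠ x) →
      (G.induce D).Reachable ⟨v, hv⟩ ⟨x, hxD⟩ := by
    intro n
    induction n with
    | zero =>
      intro v hv hn _
      simp only [Function.iterate_zero, id_eq] at hn
      subst hn
      rfl
    | succ n ih =>
      intro v hv hn hmin
      have hvx : v ≠ x := by
        have := hmin 0 (Nat.succ_pos n)
        simpa using this
      have hvr : v ≠ r := by
        rintro rfl
        have : f^[n + 1] v = v := Function.iterate_fixed hr (n + 1)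
        rw [hn] at this
        exact hvx this.symm
      have hfv : f^[n] (f v) = x := by
        rw [← Function.iterate_succ_apply]
        exact hn
      have hfvD : f v ∈ D := by
        constructor
        · exact ⟨n, hfv⟩
        · intro hTm
          exact hv.2 (hT v hTm)
      have hmin' : ∀ i, i < n → f^[i] (f v) ≠ x := by
        intro i hi
        rw [← Function.iterate_succ_apply]
        exact hmin (i + 1) (by omega)
      have hadj' : (G.induce D).Adj ⟨v, hv⟩ ⟨f v, hfvD⟩ := by
        simp only [SimpleGraph.comap_adj, Function.Embedding.coe_subtype]
        exact hadj v hvr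
      exact hadj'.reachable.trans (ih (f v) hfvD hfv hmin')
  have reach : ∀ (v : V) (hv : v ∈ D), (G.induce D).Reachable ⟨v, hv⟩ ⟨x, hxD⟩ := by
    intro v hv
    have hex : ∃ n, f^[n] v = x := hv.1
    exact main (Nat.find hex) v hv (Nat.find_spec hex) fun i hi => Nat.find_min hex hi
  rw [SimpleGraph.connected_iff_exists_forall_reachable]
  exact ⟨⟨x, hxD⟩, fun w => (reach w.1 w.2).symm⟩



variable {V : Type*}

lemma exists_parent (G : SimpleGraph V) (hG : G.Connected) (q : ℕ) (p : ℕ → V)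
    (pInj : ∀ i j, i ≤ q → j ≤ q → p i = p j → i = j)
    (pAdj : ∀ i, i < q → G.Adj (p i) (p (i + 1))) :
    ∃ f : V → V, f (p q) = p q ∧ (∀ v, v ≠ p q → G.Adj v (f v)) ∧
      (∀ v, ∃ N, f^[N] v = p q) ∧ (∀ i j, i + j ≤ q → f^[j] (p i) = p (i + j)) := by
  classical
  have closer : ∀ v, v ≠ p q → ∃ u, G.Adj v u ∧ G.dist u (p q) < G.dist v (p q) := by
    intro v hv
    obtain ⟨w, hw⟩ := hG.exists_walk_length_eq_dist v (p q)
    cases w with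
    | nil => exact absurd rfl hv
    | cons hadj w' =>
      refine ⟨_, hadj, ?_⟩
      have h1 := SimpleGraph.dist_le w'
      simp only [SimpleGraph.Walk.length_cons] at hw
      omega
  let f : V → V := fun v =>
    if h : ∃ i, i < q ∧ p i = v then p (Classical.choose h + 1)
    else if h2 : v = p q then v else Classical.choose (closer v h2)
  have hfp : ∀ i, i < q → f (p i) = p (i + 1) := by
    intro i hi
    have hex : ∃ i', i' < q ∧ p i' = p i := ⟨i, hi, rfl⟩
    have hspec := Classical.choose_spec hex
    have : Classical.choose hex = i := pInj _ i hspec.1.le hi.le hspec.2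
    simp only [f, dif_pos hex, this]
  have hfr : f (p q) = p q := by
    have hnex : ¬∃ i, i < q ∧ p i = p q := by
      rintro ⟨i, hi, hip⟩
      exact absurd (pInj i q hi.le le_rfl hip) (by omega)
    simp only [f, dif_neg hnex]
    simp
  have hfc : ∀ v (h1 : ¬∃ i, i < q ∧ p i = v) (h2 : v ≠ p q),
      G.Adj v (f v) ∧ G.dist (f v) (p q) < G.dist v (p q) := by
    intro v h1 h2
    simp only [f, dif_neg h1, dif_neg h2]
    exact Classical.choose_spec (closer v h2)
  have hiter : ∀ j i, i + j ≤ q → f^[j] (p i) = p (i + j) := by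
    intro j
    induction j with
    | zero => intro i _; simp
    | succ j ih =>
      intro i hij
      rw [Function.iterate_succ_apply, hfp i (by omega), ih (i + 1) (by omega)]
      congr 1
      omega
  have hreach : ∀ v, ∃ N, f^[N] v = p q := by
    have key : ∀ D v, G.dist v (p q) ≤ D → ∃ N, f^[N] v = p q := by
      intro D
      induction D with
      | zero =>
        intro v hD
        by_cases hvr : v = p q
        · exact ⟨0, hvr⟩
        · by_cases hex : ∃ i, i < q ∧ p i = v
          · obtain ⟨i, hi, rfl⟩ := hex
            exact ⟨q - i, by rw [hiter (q - i) i (by omega)]; congr 1; omega⟩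
          · obtain ⟨-, hlt⟩ := hfc v hex hvr
            omega
      | succ D ih =>
        intro v hD
        by_cases hvr : v = p q
        · exact ⟨0, hvr⟩
        · by_cases hex : ∃ i, i < q ∧ p i = v
          · obtain ⟨i, hi, rfl⟩ := hex
            exact ⟨q - i, by rw [hiter (q - i) i (by omega)]; congr 1; omega⟩
          · obtain ⟨-, hlt⟩ := hfc v hex hvr
            obtain ⟨N, hN⟩ := ih (f v) (by omega)
            exact ⟨N + 1, by rw [Function.iterate_succ_apply, hN]⟩
    exact fun v => key (G.dist v (p q)) v le_rfl
  have hadjAll : ∀ v, v ≠ p q → G.Adj v (f v) := by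
    intro v hv
    by_cases hex : ∃ i, i < q ∧ p i = v
    · obtain ⟨i, hi, rfl⟩ := hex
      rw [hfp i hi]
      exact pAdj i hi
    · exact (hfc v hex hv).1
  exact ⟨f, hfr, hadjAll, hreach, fun i j h => hiter j i h⟩


end A

section B
variable {V : Type*} [DecidableEq V]


open Finset

variable {V : Type*} [DecidableEq V]
set_option linter.unusedSectionVars false

lemma sum_filter_erase (G : SimpleGraph V) [DecidableRel G.Adj] (W : Finset V) {v : V}
    (hv : v ∈ W) :
    ∑ u ∈ W, ((W.filter (G.Adj u)).card)
      = (∑ u ∈ W.erase v, (((W.erase v).filter (G.Adj u)).card))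
        + 2 * (W.filter (G.Adj v)).card := by
  classical
  set A := W.erase v with hA
  have hvA : v ∉ A := Finset.notMem_erase v W
  have hWA : W = insert v A := (Finset.insert_erase hv).symm
  have hfilt : ∀ u : V, ((insert v A).filter (G.Adj u))
      = if G.Adj u v then insert v (A.filter (G.Adj u)) else A.filter (G.Adj u) := by
    intro u
    exact Finset.filter_insert (p := G.Adj u) v A
  have hfiltv : ((insert v A).filter (G.Adj v)) = A.filter (G.Adj v) := by
    rw [hfilt v, if_neg (G.irrefl)]
  have hcard : ∀ u : V, (((insert v A).filter (G.Adj u)).card)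
      = (A.filter (G.Adj u)).card + (if G.Adj u v then 1 else 0) := by
    intro u
    rw [hfilt u]
    by_cases h : G.Adj u v
    · rw [if_pos h, if_pos h, Finset.card_insert_of_notMem (fun hm => hvA (Finset.mem_of_mem_filter _ hm))]
    · rw [if_neg h, if_neg h, Nat.add_zero]
  rw [hWA, Finset.sum_insert hvA, hfiltv]
  have hsum : ∑ u ∈ A, (((insert v A).filter (G.Adj u)).card)
      = (∑ u ∈ A, ((A.filter (G.Adj u)).card)) + (A.filter (fun u => G.Adj u v)).card := by
    rw [Finset.sum_congr rfl (fun u _ => hcard u), Finset.sum_add_distrib]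
    congr 1
    exact (Finset.card_filter _ _).symm
  rw [hsum]
  have hcomm : A.filter (fun u => G.Adj u v) = A.filter (G.Adj v) := by
    apply Finset.filter_congr
    intro u _
    simp [G.adj_comm]
  rw [hcomm]
  ring

lemma exists_mindeg (G : SimpleGraph V) [DecidableRel G.Adj] (n₀ M : ℕ) (hM : 1 ≤ M) :
    ∀ (N : ℕ) (W : Finset V), W.card ≤ N → W.Nonempty →
      2 * M * W.card ≤ n₀ * ∑ u ∈ W, ((W.filter (G.Adj u)).card) →
      ∃ U : Finset V, U.Nonempty ∧ ∀ v ∈ U, M ≤ n₀ * ((U.filter (G.Adj v)).card) := by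
  classical
  intro N
  induction N with
  | zero =>
    intro W hWc hne _
    exact absurd (Finset.card_pos.mpr hne) (by omega)
  | succ N ih =>
    intro W hWc hne hinv
    by_cases hall : ∀ v ∈ W, M ≤ n₀ * ((W.filter (G.Adj v)).card)
    · exact ⟨W, hne, hall⟩
    · push_neg at hall
      obtain ⟨v, hv, hlt⟩ := hall
      set W' := W.erase v with hW'
      have hkey := sum_filter_erase G W hv
      by_cases hne' : W'.Nonempty
      · have hcard : W.card = W'.card + 1 := by
          rw [hW', Finset.card_erase_of_mem hv]
          have : 1 ≤ W.card := Finset.card_pos.mpr hne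
          omega
        apply ih W' (by omega) hne'
        -- invariant
        have e1 : n₀ * ((∑ u ∈ W', (((W'.filter (G.Adj u)).card)))
            + 2 * (W.filter (G.Adj v)).card)
            = n₀ * (∑ u ∈ W', ((W'.filter (G.Adj u)).card))
              + 2 * (n₀ * (W.filter (G.Adj v)).card) := by ring
        have e2 : 2 * M * W.card = 2 * M * W'.card + 2 * M := by rw [hcard]; ring
        rw [hkey, e1] at hinv
        rw [e2] at hinv
        have h3 : n₀ * (W.filter (G.Adj v)).card + 1 ≤ M := hlt
        linarith
      · exfalso
        rw [Finset.not_nonempty_iff_eq_empty] at hne'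
        have hWv : W = {v} := by
          rcases (Finset.erase_eq_empty_iff W v).mp hne' with h | h
          · exact absurd h (Finset.nonempty_iff_ne_empty.mp hne)
          · exact h
        rw [hWv] at hinv
        simp only [Finset.sum_singleton, Finset.card_singleton, Finset.filter_singleton,
          if_neg (G.irrefl)] at hinv
        simp at hinv
        omega

lemma exists_path (G : SimpleGraph V) [DecidableRel G.Adj] (q : ℕ) (U : Finset V)
    (hU : U.Nonempty) (hdeg : ∀ v ∈ U, q ≤ ((U.filter (G.Adj v)).card)) :
    ∃ p : ℕ → V, (∀ i j, i ≤ q → j ≤ q → p i = p j → i = j) ∧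
      ∀ i, i < q → G.Adj (p i) (p (i + 1)) := by
  classical
  have hlist : ∀ L, L ≤ q + 1 → ∃ l : List V, l.length = L ∧ l.Nodup ∧
      (∀ x ∈ l, x ∈ U) ∧ l.Chain' G.Adj := by
    intro L
    induction L with
    | zero => exact fun _ => ⟨[], rfl, List.nodup_nil, by simp, List.isChain_nil⟩
    | succ L ih =>
      intro hL
      obtain ⟨l, hlen, hnd, hmem, hch⟩ := ih (by omega)
      cases l with
      | nil =>
        obtain ⟨u, hu⟩ := hU
        refine ⟨[u], ?_, List.nodup_singleton u, by simpa using hu, List.isChain_singleton u⟩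
        simp at hlen
        simp [← hlen]
      | cons h tl =>
        have hhU : h ∈ U := hmem h List.mem_cons_self
        have hLq : L ≤ q := by omega
        set l := h :: tl with hl
        set C := (U.filter (G.Adj h)) \ l.toFinset with hC
        have hne : C.Nonempty := by
          by_contra hcon
          rw [Finset.not_nonempty_iff_eq_empty] at hcon
          have hhf : h ∉ U.filter (G.Adj h) := by
            simp [G.irrefl]
          have hsd : (U.filter (G.Adj h)) \ (l.toFinset.erase h) = C := by
            rw [hC]
            ext x
            simp only [Finset.mem_sdiff, Finset.mem_erase]
            constructor
            · rintro ⟨hx1, hx2⟩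
              refine ⟨hx1, fun hx3 => hx2 ⟨fun he => ?_, hx3⟩⟩
              subst he
              exact hhf hx1
            · rintro ⟨hx1, hx2⟩
              exact ⟨hx1, fun h3 => hx2 h3.2⟩
          have hb := Finset.card_le_card_sdiff_add_card (s := U.filter (G.Adj h))
            (t := l.toFinset.erase h)
          rw [hsd, hcon] at hb
          simp only [Finset.card_empty, Nat.zero_add] at hb
          have hhl : h ∈ l.toFinset := by
            rw [hl]
            exact List.mem_toFinset.mpr List.mem_cons_self
          have h1 : (l.toFinset.erase h).card = l.toFinset.card - 1 :=
            Finset.card_erase_of_mem hhl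
          have h2 : l.toFinset.card ≤ l.length := l.toFinset_card_le
          have h3 : q ≤ (U.filter (G.Adj h)).card := hdeg h hhU
          have h4 : l.length = L := hlen
          have h5 : 0 < l.toFinset.card := Finset.card_pos.mpr ⟨h, hhl⟩
          omega
        obtain ⟨w, hw⟩ := hne
        rw [hC, Finset.mem_sdiff, Finset.mem_filter] at hw
        obtain ⟨⟨hwU, hwadj⟩, hwl⟩ := hw
        refine ⟨w :: l, by simp [hlen], ?_, ?_, ?_⟩
        · rw [List.nodup_cons]
          exact ⟨fun hc => hwl (List.mem_toFinset.mpr hc), hnd⟩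
        · intro x hx
          rcases List.mem_cons.mp hx with h1 | h2
          · subst h1; exact hwU
          · exact hmem x h2
        · rw [hl]
          exact List.isChain_cons_cons.mpr ⟨hwadj.symm, hch⟩
  obtain ⟨l, hlen, hnd, hmem, hch⟩ := hlist (q + 1) le_rfl
  obtain ⟨u₀, hu₀⟩ := hU
  refine ⟨fun i => l.getD i u₀, ?_, ?_⟩
  · intro i j hi hj hij
    have hi' : i < l.length := by omega
    have hj' : j < l.length := by omega
    have hij' : l.getD i u₀ = l.getD j u₀ := hij
    rw [List.getD_eq_getElem l u₀ hi', List.getD_eq_getElem l u₀ hj'] at hij'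
    have h2 : (⟨i, hi'⟩ : Fin l.length) = ⟨j, hj'⟩ :=
      List.nodup_iff_injective_getElem.mp hnd (by simpa using hij')
    exact congrArg Fin.val h2
  · intro i hi
    have hi1 : i < l.length - 1 := by omega
    have h := List.isChain_iff_getElem.mp hch i (by omega)
    show G.Adj (l.getD i u₀) (l.getD (i + 1) u₀)
    rw [List.getD_eq_getElem l u₀ (show i < l.length by omega),
      List.getD_eq_getElem l u₀ (show i + 1 < l.length by omega)]
    simpa [List.get_eq_getElem] using h


end B

section C


lemma chain_union {α : Type*} {k : ℕ} (hk : 1 ≤ k) (c : ℕ → Set α)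
    (hmono : ∀ j, c j ⊆ c (j + 1)) (h0 : c 0 = ∅) (hks : c k = Set.univ) :
    (⋃ i : Fin k, (c (i + 1) \ c i)) = Set.univ := by
  classical
  apply Set.eq_univ_of_forall
  intro v
  have hex : ∃ j, v ∈ c j := ⟨k, by rw [hks]; trivial⟩
  set j := Nat.find hex with hj
  have hjs : v ∈ c j := Nat.find_spec hex
  have hj1 : 1 ≤ j := by
    rcases Nat.eq_zero_or_pos j with h | h
    · rw [h, h0] at hjs; exact absurd hjs (Set.notMem_empty v)
    · exact h
  have hmono' : ∀ a b, a ≤ b → c a ⊆ c b := by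
    intro a b hab
    induction b with
    | zero => have : a = 0 := by omega
              rw [this]
    | succ b ih =>
      rcases Nat.lt_or_ge a (b+1) with h | h
      · exact (ih (by omega)).trans (hmono b)
      · have : a = b + 1 := by omega
        rw [this]
  have hjk : j ≤ k := Nat.find_le (by rw [hks]; trivial)
  have hnot : v ∉ c (j - 1) := Nat.find_min hex (by omega)
  refine Set.mem_iUnion.mpr ⟨⟨j - 1, by omega⟩, ?_, ?_⟩
  · show v ∈ c (j - 1 + 1)
    have : j - 1 + 1 = j := by omega
    rw [this]; exact hjs
  · exact hnot

lemma chain_disjoint {α : Type*} {k : ℕ} (c : ℕ → Set α)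
    (hmono : ∀ j, c j ⊆ c (j + 1)) :
    Pairwise fun i j : Fin k => Disjoint (c (i + 1) \ c i) (c (j + 1) \ c j) := by
  have hmono' : ∀ a b, a ≤ b → c a ⊆ c b := by
    intro a b hab
    induction b with
    | zero => have : a = 0 := by omega
              rw [this]
    | succ b ih =>
      rcases Nat.lt_or_ge a (b+1) with h | h
      · exact (ih (by omega)).trans (hmono b)
      · have : a = b + 1 := by omega
        rw [this]
  have key : ∀ i j : Fin k, (i : ℕ) < j → Disjoint (c (i + 1) \ c i) (c (j + 1) \ c j) := by
    intro i j hij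
    have h1 : c (i + 1) \ c i ⊆ c j := (Set.diff_subset).trans (hmono' _ _ (by omega))
    have h2 : Disjoint (c (j : ℕ)) (c (j + 1) \ c j) := disjoint_sdiff_self_right
    exact h2.mono_left h1
  intro i j hij
  rcases lt_or_gt_of_ne (fun h => hij (Fin.ext h) : (i : ℕ) ≠ j) with h | h
  · exact key i j h
  · exact (key j i h).symm

lemma mem_kVertexTuples_perm {V : Type*} (G : SimpleGraph V) {k : ℕ}
    (u : Fin k → ℕ) (Pa : Fin k → Set V)
    (h1 : ∀ i, 1 ≤ u i) (h2 : (⋃ i, Pa i) = Set.univ)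
    (h3 : Pairwise fun i j => Disjoint (Pa i) (Pa j))
    (h4 : ∀ i, (G.induce (Pa i)).Connected ∧ (Pa i).ncard = u i)
    (π : Equiv.Perm (Fin k))
    (hmono : ∀ i j : Fin k, i ≤ j → u (π j) ≤ u (π i)) :
    (fun i => u (π i)) ∈ kVertexTuples G k := by
  refine ⟨fun i => h1 (π i), hmono, fun i => Pa (π i), ?_, ?_, fun i => h4 (π i)⟩
  · rw [show (⋃ i, (fun i => Pa (π i)) i) = ⋃ i, Pa (π i) from rfl,
      π.surjective.iUnion_comp Pa]
    exact h2
  · intro i j hij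
    exact h3 (fun h => hij (π.injective h))

lemma count_lower {α β : Type*} [Fintype α] [DecidableEq β] (Φ : α → β) (S : Set β)
    (hmem : ∀ a, Φ a ∈ S) (hS : S.Finite) (K : ℕ)
    (hfib : ∀ b, K ≥ (Finset.univ.filter (fun a => Φ a = b)).card) :
    Fintype.card α ≤ K * S.ncard := by
  classical
  have h1 : (Finset.univ : Finset α).card
      = ∑ b ∈ Finset.univ.image Φ, (Finset.univ.filter (fun a => Φ a = b)).card :=
    Finset.card_eq_sum_card_image Φ Finset.univ
  have h2 : ∑ b ∈ Finset.univ.image Φ, (Finset.univ.filter (fun a => Φ a = b)).card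
      ≤ ∑ _b ∈ Finset.univ.image Φ, K := Finset.sum_le_sum (fun b _ => hfib b)
  have h3 : ((Finset.univ.image Φ : Finset β) : Set β) ⊆ S := by
    intro b hb
    simp only [Finset.coe_image, Set.mem_image] at hb
    obtain ⟨a, _, rfl⟩ := hb
    exact hmem a
  have h4 : (Finset.univ.image Φ).card ≤ S.ncard := by
    rw [← Set.ncard_coe_finset]
    exact Set.ncard_le_ncard h3 hS
  rw [Finset.sum_const, smul_eq_mul] at h2
  calc Fintype.card α = (Finset.univ : Finset α).card := rfl
    _ ≤ (Finset.univ.image Φ).card * K := by omega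
    _ ≤ S.ncard * K := Nat.mul_le_mul_right K h4
    _ = K * S.ncard := Nat.mul_comm _ _



def finToNat {a b : ℕ} (mm : Fin a → Fin b) (j : ℕ) : ℕ :=
  if h : j < a then (mm ⟨j, h⟩ : ℕ) else 0

lemma finToNat_lt {a b : ℕ} (hb : 1 ≤ b) (mm : Fin a → Fin b) (j : ℕ) :
    finToNat mm j < b := by
  unfold finToNat
  split
  · exact (mm _).isLt
  · omega

def JmD (k t q : ℕ) (g : ℕ → ℕ) (j : ℕ) : ℕ :=
  if j < k then (j - 1) * t + g (j - 1) + 1 else q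

def cD {V : Type*} (f : V → V) (p : ℕ → V) (k t q : ℕ) (g : ℕ → ℕ) (j : ℕ) : Set V :=
  if j = 0 then ∅ else Sub f (p (JmD k t q g j))

end C

end PiGeAux

/-- for a finite connected graph `G` on `n ≥ k` vertices with average
degree `d` and fixed `k ≥ 2`, `π(G,k) ≥ (1/k!) ⌊d/(4(k−1))⌋^(k−1)`. -/
theorem pi_ge {V : Type*} [Fintype V] (G : SimpleGraph V) (hG : G.Connected)
    (k : ℕ) (hk : 2 ≤ k) (hkn : k ≤ Fintype.card V)
    (d : ℝ) (hd : d = 2 * (G.edgeSet.ncard : ℝ) / (Fintype.card V : ℝ)) :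
    (1 / (Nat.factorial k : ℝ)) * (⌊d / (4 * ((k : ℝ) - 1))⌋₊ : ℝ) ^ (k - 1) ≤
      (piG G k : ℝ) := by
  classical
  set t := ⌊d / (4 * ((k : ℝ) - 1))⌋₊ with ht
  rcases Nat.eq_zero_or_pos t with ht0 | ht1
  · rw [ht0]
    rw [Nat.cast_zero, zero_pow (by omega : k - 1 ≠ 0), mul_zero]
    positivity
  · -- dense case
    haveI hDadj : DecidableRel G.Adj := Classical.decRel _
    open PiGeAux in
    set n := Fintype.card V with hn
    have hn2 : 2 ≤ n := le_trans hk hkn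
    have hnpos : 0 < n := by omega
    set m := G.edgeSet.ncard with hm
    have hmF : m = G.edgeFinset.card := by
      rw [hm, ← SimpleGraph.coe_edgeFinset, Set.ncard_coe_finset]
    have hdegsum : (∑ u ∈ Finset.univ, ((Finset.univ.filter (G.Adj u)).card)) = 2 * m := by
      have h1 : ∀ u : V, (Finset.univ.filter (G.Adj u)).card = G.degree u := by
        intro u
        rw [← SimpleGraph.neighborFinset_eq_filter]
        rfl
      rw [Finset.sum_congr rfl fun u _ => h1 u,
        SimpleGraph.sum_degrees_eq_twice_card_edges, hmF]
    have hk1 : (1:ℕ) ≤ k := by omega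
    have h4kpos : (0:ℝ) < 4 * ((k:ℝ) - 1) := by
      have h2k : (2:ℝ) ≤ (k:ℝ) := by exact_mod_cast hk
      linarith
    have hdnn : 0 ≤ d / (4 * ((k : ℝ) - 1)) := by
      rw [hd]
      positivity
    have hfl : (t : ℝ) ≤ d / (4 * ((k : ℝ) - 1)) := by
      rw [ht]; exact Nat.floor_le hdnn
    have hflm : (t : ℝ) * (4 * ((k:ℝ) - 1)) ≤ d := (le_div_iff₀ h4kpos).mp hfl
    have hnR : (0:ℝ) < (n : ℝ) := by exact_mod_cast hnpos
    have hdm : d * n = 2 * m := by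
      rw [hd]
      field_simp
    have hRR : (t:ℝ) * (4 * ((k:ℝ) - 1)) * n ≤ 2 * m := by
      calc (t:ℝ) * (4 * ((k:ℝ)-1)) * n ≤ d * n :=
            mul_le_mul_of_nonneg_right hflm (le_of_lt hnR)
        _ = 2 * m := hdm
    have hcast : ((k - 1 : ℕ) : ℝ) = (k:ℝ) - 1 := by
      rw [Nat.cast_sub hk1, Nat.cast_one]
    have hnat : 2 * ((k-1) * t * n) ≤ m := by
      have h2 : ((4 * ((k-1) * t * n) : ℕ) : ℝ) ≤ ((2 * m : ℕ) : ℝ) := by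
        push_cast [hcast]
        nlinarith [hRR]
      have h3 : 4 * ((k-1) * t * n) ≤ 2 * m := by exact_mod_cast h2
      omega
    set q := (k - 1) * t + 1 with hq
    have hkt1 : 1 ≤ (k - 1) * t := Nat.mul_pos (by omega) ht1
    have hnq : n * q ≤ m := by
      have h1 : n * q ≤ 2 * ((k-1) * t * n) := by nlinarith
      omega
    have hm1 : 1 ≤ m := by nlinarith
    have hVne : Nonempty V := Fintype.card_pos_iff.mp (by omega)
    obtain ⟨U, hUne, hUdeg⟩ := exists_mindeg G n m hm1 (Finset.univ.card)
      Finset.univ le_rfl Finset.univ_nonempty (by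
        rw [hdegsum, Finset.card_univ, ← hn]
        exact le_of_eq (by ring))
    have hUq : ∀ v ∈ U, q ≤ ((U.filter (G.Adj v)).card) := by
      intro v hv
      have h2 : n * q ≤ n * ((U.filter (G.Adj v)).card) := le_trans hnq (hUdeg v hv)
      exact Nat.le_of_mul_le_mul_left h2 hnpos
    obtain ⟨p, pInj, pAdj⟩ := exists_path G q U hUne hUq
    obtain ⟨f, hfr, hfadj, hfreach, hfiter⟩ := exists_parent G hG q p pInj pAdj
    -- basic subtree facts
    have hsubmono : ∀ a b, a ≤ b → b ≤ q → Sub f (p a) ⊆ Sub f (p b) := by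
      intro a b hab hbq v hv
      obtain ⟨nn, hnn⟩ := hv
      refine ⟨(b - a) + nn, ?_⟩
      rw [Function.iterate_add_apply, hnn, hfiter a (b-a) (by omega)]
      congr 1
      omega
    have hmemSub : ∀ a b, a ≤ b → b ≤ q → p a ∈ Sub f (p b) := fun a b hab hbq =>
      hsubmono a b hab hbq (mem_Sub_self f (p a))
    have hsubstrict : ∀ a b, a < b → b ≤ q → p b ∉ Sub f (p a) := by
      intro a b hab hbq
      apply not_mem_Sub hfr hfreach (hmemSub a b (by omega) hbq)
      intro he
      exact absurd (pInj a b (by omega) hbq he) (by omega)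
    -- index bounds
    have hglt : ∀ (mm : Fin (k-1) → Fin t) (j : ℕ), finToNat mm j < t :=
      fun mm j => finToNat_lt ht1 mm j
    have hJle : ∀ (mm : Fin (k-1) → Fin t) (j : ℕ), j < k →
        JmD k t q (finToNat mm) j ≤ (k-1) * t := by
      intro mm j hj
      rw [JmD, if_pos hj]
      have h3 : finToNat mm (j-1) < t := hglt mm _
      have h4 : (j-1) * t ≤ (k-2) * t := Nat.mul_le_mul_right t (by omega)
      have h5 : (k-2) * t + t = (k-1) * t := by
        rw [show (k-1) = (k-2) + 1 by omega]
        ring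
      omega
    have hJq : ∀ (mm : Fin (k-1) → Fin t) (j : ℕ), JmD k t q (finToNat mm) j ≤ q := by
      intro mm j
      by_cases hj : j < k
      · have := hJle mm j hj
        omega
      · rw [JmD, if_neg hj]
    have hJmono : ∀ (mm : Fin (k-1) → Fin t) (j : ℕ), 1 ≤ j → j < k →
        JmD k t q (finToNat mm) j < JmD k t q (finToNat mm) (j+1) := by
      intro mm j h1 h2
      by_cases h3 : j + 1 < k
      · rw [JmD, JmD, if_pos h2, if_pos h3]
        have h4 : finToNat mm (j-1) < t := hglt mm _
        have h5 : (j-1) * t + t = j * t := by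
          have h5a : (j - 1 + 1) * t = (j - 1) * t + t := by ring
          rw [show j - 1 + 1 = j from by omega] at h5a
          omega
        have h6 : j + 1 - 1 = j := by omega
        rw [h6]
        have h7 : (j-1) * t + finToNat mm (j-1) + 1 ≤ j * t := by omega
        omega
      · have h8 : JmD k t q (finToNat mm) (j+1) = q := by rw [JmD, if_neg h3]
        have h9 := hJle mm j h2
        rw [h8]
        omega
    -- the chain is monotone
    have hcmono : ∀ (mm : Fin (k-1) → Fin t) (j : ℕ),
        cD f p k t q (finToNat mm) j ⊆ cD f p k t q (finToNat mm) (j+1) := by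
      intro mm j
      by_cases h0 : j = 0
      · rw [h0]
        simp [cD]
      · by_cases hjk : j < k
        · rw [cD, cD, if_neg h0, if_neg (by omega)]
          exact hsubmono _ _ (le_of_lt (hJmono mm j (by omega) hjk)) (hJq mm (j+1))
        · rw [cD, cD, if_neg h0, if_neg (by omega), JmD, JmD, if_neg hjk,
            if_neg (by omega)]
    have hck : ∀ (mm : Fin (k-1) → Fin t), cD f p k t q (finToNat mm) k = Set.univ := by
      intro mm
      rw [cD, if_neg (by omega), JmD, if_neg (by omega)]
      exact Sub_root hfreach
    have hc0 : ∀ (mm : Fin (k-1) → Fin t), cD f p k t q (finToNat mm) 0 = ∅ := by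
      intro mm
      simp [cD]
    -- parts and sizes
    set uu : (Fin (k-1) → Fin t) → Fin k → ℕ := fun mm i =>
      ((cD f p k t q (finToNat mm) ((i:ℕ)+1)) \ (cD f p k t q (finToNat mm) (i:ℕ))).ncard
      with huu
    have hwit : ∀ (mm : Fin (k-1) → Fin t) (j : ℕ), j < k →
        p (JmD k t q (finToNat mm) (j+1)) ∈ cD f p k t q (finToNat mm) (j+1) ∧
        p (JmD k t q (finToNat mm) (j+1)) ∉ cD f p k t q (finToNat mm) j := by
      intro mm j hj
      constructor
      · rw [cD, if_neg (by omega)]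
        exact mem_Sub_self f _
      · by_cases h0 : j = 0
        · rw [h0]
          simp [cD]
        · rw [cD, if_neg h0]
          exact hsubstrict _ _ (hJmono mm j (by omega) hj) (hJq mm (j+1))
    have hSstrict : ∀ (mm : Fin (k-1) → Fin t) (j : ℕ), j < k →
        (cD f p k t q (finToNat mm) j).ncard < (cD f p k t q (finToNat mm) (j+1)).ncard := by
      intro mm j hj
      apply Set.ncard_lt_ncard _ (Set.toFinite _)
      rw [Set.ssubset_iff_of_subset (hcmono mm j)]
      exact ⟨_, (hwit mm j hj).1, (hwit mm j hj).2⟩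
    have hcardPt : ∀ (mm : Fin (k-1) → Fin t) (i : Fin k), uu mm i =
        (cD f p k t q (finToNat mm) ((i:ℕ)+1)).ncard - (cD f p k t q (finToNat mm) (i:ℕ)).ncard := by
      intro mm i
      rw [huu]
      exact Set.ncard_diff (hcmono mm (i:ℕ)) (Set.toFinite _)
    have hupos : ∀ (mm : Fin (k-1) → Fin t) (i : Fin k), 1 ≤ uu mm i := by
      intro mm i
      rw [hcardPt]
      have := hSstrict mm (i:ℕ) i.isLt
      omega
    -- injectivity of mm ↦ uu mm
    have hSrec : ∀ (mm : Fin (k-1) → Fin t) (j : ℕ) (hj : j < k),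
        (cD f p k t q (finToNat mm) (j+1)).ncard
          = (cD f p k t q (finToNat mm) j).ncard + uu mm ⟨j, hj⟩ := by
      intro mm j hj
      have h1 := hcardPt mm ⟨j, hj⟩
      have h2 := hSstrict mm j hj
      simp only at h1
      omega
    have hncard_inj : ∀ a b, a ≤ q → b ≤ q →
        (Sub f (p a)).ncard = (Sub f (p b)).ncard → a = b := by
      intro a b ha hb heq
      by_contra hne
      have hmain : ∀ a' b', a' < b' → b' ≤ q → (Sub f (p a')).ncard < (Sub f (p b')).ncard := by
        intro a' b' h1 h2
        apply Set.ncard_lt_ncard _ (Set.toFinite _)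
        rw [Set.ssubset_iff_of_subset (hsubmono a' b' (by omega) h2)]
        exact ⟨p b', mem_Sub_self f _, hsubstrict a' b' h1 h2⟩
      rcases Nat.lt_or_ge a b with h | h
      · have := hmain a b h hb
        omega
      · have := hmain b a (by omega) ha
        omega
    have hUinj : Function.Injective uu := by
      intro mm mm' heq
      have hSeq : ∀ j, j ≤ k →
          (cD f p k t q (finToNat mm) j).ncard = (cD f p k t q (finToNat mm') j).ncard := by
        intro j
        induction j with
        | zero => intro _; rw [hc0, hc0]
        | succ j ih =>
          intro hj
          rw [hSrec mm j (by omega), hSrec mm' j (by omega), ih (by omega), heq]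
      funext i
      have h1 := hSeq ((i:ℕ)+1) (by omega)
      have h2 : ∀ mm0 : Fin (k-1) → Fin t,
          (cD f p k t q (finToNat mm0) ((i:ℕ)+1)).ncard
            = (Sub f (p (JmD k t q (finToNat mm0) ((i:ℕ)+1)))).ncard := by
        intro mm0
        rw [cD, if_neg (by omega)]
      rw [h2 mm, h2 mm'] at h1
      have h3 : JmD k t q (finToNat mm) ((i:ℕ)+1) = JmD k t q (finToNat mm') ((i:ℕ)+1) :=
        hncard_inj _ _ (hJq mm _) (hJq mm' _) h1
      rw [JmD, JmD, if_pos (by omega), if_pos (by omega)] at h3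
      simp only [Nat.add_sub_cancel] at h3
      have h4 : finToNat mm (i:ℕ) = finToNat mm' (i:ℕ) := by omega
      have h5 : ∀ mm0 : Fin (k-1) → Fin t, finToNat mm0 (i:ℕ) = (mm0 i : ℕ) := by
        intro mm0
        rw [finToNat, dif_pos i.isLt, Fin.eta]
      rw [h5 mm, h5 mm'] at h4
      exact Fin.val_injective h4
    -- connectivity of the parts
    have hconn : ∀ (mm : Fin (k-1) → Fin t) (i : Fin k),
        (G.induce ((cD f p k t q (finToNat mm) ((i:ℕ)+1)) \ (cD f p k t q (finToNat mm) (i:ℕ)))).Connected := by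
      intro mm i
      obtain ⟨iv, hivlt⟩ := i
      cases iv with
      | zero =>
        show (G.induce ((cD f p k t q (finToNat mm) 1) \ (cD f p k t q (finToNat mm) 0))).Connected
        rw [hc0, cD, if_neg (by omega)]
        exact part_connected G hfr hfadj _ ∅ (Set.notMem_empty _)
          (fun v hv => absurd hv (Set.notMem_empty _))
      | succ jj =>
        show (G.induce ((cD f p k t q (finToNat mm) (jj+1+1)) \ (cD f p k t q (finToNat mm) (jj+1)))).Connected
        rw [cD, cD, if_neg (by omega), if_neg (by omega)]
        refine part_connected G hfr hfadj _ _ ?_ ?_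
        · exact hsubstrict _ _ (hJmono mm (jj+1) (by omega) hivlt) (hJq mm (jj+2))
        · intro v hv
          obtain ⟨nn, hnn⟩ := hv
          exact ⟨nn+1, by rw [Function.iterate_succ_apply]; exact hnn⟩
    -- the sorted tuple map
    set Φ : (Fin (k-1) → Fin t) → (Fin k → ℕ) := fun mm i =>
      uu mm (Tuple.sort (uu mm) (Fin.rev i)) with hΦ
    have hmemKV : ∀ mm, Φ mm ∈ kVertexTuples G k := by
      intro mm
      have h4 : ∀ i : Fin k, (G.induce ((cD f p k t q (finToNat mm) ((i:ℕ)+1)) \ (cD f p k t q (finToNat mm) (i:ℕ)))).Connected ∧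
          ((cD f p k t q (finToNat mm) ((i:ℕ)+1)) \ (cD f p k t q (finToNat mm) (i:ℕ))).ncard = uu mm i :=
        fun i => ⟨hconn mm i, rfl⟩
      have hperm := mem_kVertexTuples_perm G (uu mm)
        (fun i : Fin k => (cD f p k t q (finToNat mm) ((i:ℕ)+1)) \ (cD f p k t q (finToNat mm) (i:ℕ)))
        (hupos mm)
        (chain_union hk1 (cD f p k t q (finToNat mm)) (hcmono mm) (hc0 mm) (hck mm))
        (chain_disjoint (cD f p k t q (finToNat mm)) (hcmono mm))
        h4
        (Fin.revPerm.trans (Tuple.sort (uu mm)))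
        (fun i j hij => Tuple.monotone_sort (uu mm) (Fin.rev_le_rev.mpr hij))
      exact hperm
    -- fibers of Φ have size at most k!
    have hfib : ∀ b : Fin k → ℕ,
        (Nat.factorial k) ≥ (Finset.univ.filter (fun mm => Φ mm = b)).card := by
      intro b
      have h1 : (Finset.univ.filter (fun mm => Φ mm = b)).card
          = ((Finset.univ.filter (fun mm => Φ mm = b)).image uu).card :=
        (Finset.card_image_of_injective _ hUinj).symm
      have h2 : ((Finset.univ.filter (fun mm => Φ mm = b)).image uu)
          ⊆ (Finset.univ : Finset (Equiv.Perm (Fin k))).image (fun π : Equiv.Perm (Fin k) => b ∘ ⇑π) := by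
        intro x hx
        rw [Finset.mem_image] at hx
        obtain ⟨mm, hmm, rfl⟩ := hx
        rw [Finset.mem_filter] at hmm
        rw [Finset.mem_image]
        refine ⟨(Fin.revPerm.trans (Tuple.sort (uu mm))).symm, Finset.mem_univ _, ?_⟩
        funext i
        show b ((Fin.revPerm.trans (Tuple.sort (uu mm))).symm i) = uu mm i
        rw [← hmm.2]
        show uu mm ((Fin.revPerm.trans (Tuple.sort (uu mm)))
          ((Fin.revPerm.trans (Tuple.sort (uu mm))).symm i)) = uu mm i
        rw [Equiv.apply_symm_apply]
      have h3 : ((Finset.univ : Finset (Equiv.Perm (Fin k))).image (fun π : Equiv.Perm (Fin k) => b ∘ ⇑π)).card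
          ≤ Nat.factorial k := by
        calc ((Finset.univ : Finset (Equiv.Perm (Fin k))).image (fun π : Equiv.Perm (Fin k) => b ∘ ⇑π)).card
            ≤ (Finset.univ : Finset (Equiv.Perm (Fin k))).card := Finset.card_image_le
          _ = Nat.factorial k := by
              rw [Finset.card_univ, Fintype.card_perm, Fintype.card_fin]
      have h4 := Finset.card_le_card h2
      omega
    -- finiteness of the tuple set
    have hfinKV : (kVertexTuples G k).Finite := by
      apply Set.Finite.subset (Set.Finite.pi (fun _ : Fin k => Set.finite_Iic n))
      rintro a ⟨h1, h2, Pa, hun, hdis, hprop⟩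
      intro i _
      simp only [Set.mem_Iic]
      rw [← (hprop i).2]
      calc (Pa i).ncard ≤ (Set.univ : Set V).ncard :=
            Set.ncard_le_ncard (Set.subset_univ _) Set.finite_univ
        _ = n := by rw [Set.ncard_univ, Nat.card_eq_fintype_card]
    -- count
    have hcount := count_lower Φ (kVertexTuples G k) hmemKV hfinKV (Nat.factorial k) hfib
    have hcard : Fintype.card (Fin (k-1) → Fin t) = t ^ (k-1) := by
      rw [Fintype.card_fun, Fintype.card_fin, Fintype.card_fin]
    rw [hcard] at hcount
    have hcountR : ((t : ℝ)) ^ (k-1) ≤ (Nat.factorial k : ℝ) * ((piG G k : ℕ) : ℝ) := by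
      exact_mod_cast hcount
    have hfpos : (0:ℝ) < (Nat.factorial k : ℝ) := by
      exact_mod_cast Nat.factorial_pos k
    rw [div_mul_eq_mul_div, one_mul, div_le_iff₀ hfpos]
    linarith
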